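/- If μ = A_n μ ∗ ν_{A_n} for Borel probability measures on a real separable Banach space and the operators A_n converge to 0 in the strong operator topology, then ν_{A_n} ⇒ μ weakly. -/

import Mathlib

open MeasureTheory Filter Topology

/-- Weak convergence of a sequence of probability measures. -/
def WeakTendsto {E : Type*} [TopologicalSpace E] [MeasurableSpace E]
    (μ : ℕ → Measure E) (ν : Measure E) : Prop :=
  ∀ f : BoundedContinuousFunction E ℝ,
    Filter.Tendsto (fun n => ∫ x, f x ∂(μ n)) Filter.atTop (nhds (∫ x, f x ∂ν))

open scoped NNReal


lemma lip_integral_tendsto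
    {E : Type*} [NormedAddCommGroup E] [NormedSpace ℝ E]
    [TopologicalSpace.SeparableSpace E] [MeasurableSpace E] [BorelSpace E]
    (μ : Measure E) [IsProbabilityMeasure μ]
    (A : ℕ → E →L[ℝ] E) (ν : ℕ → Measure E)
    (hν : ∀ n, IsProbabilityMeasure (ν n))
    (hfac : ∀ n, μ = (μ.map (A n)).conv (ν n))
    (hA : ∀ x : E, Filter.Tendsto (fun n => A n x) Filter.atTop (nhds (0 : E)))
    (f : BoundedContinuousFunction E ℝ) (L : ℝ≥0) (hf : LipschitzWith L f) :
    Tendsto (fun n => ∫ x, f x ∂(ν n)) atTop (𝓝 (∫ x, f x ∂μ)) := by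
  have hfb : ∀ z : E, ‖f z‖ ≤ ‖f‖ := fun z => f.norm_coe_le_norm z
  haveI : SecondCountableTopology E := UniformSpace.secondCountable_of_separable E
  haveI : MeasurableAdd₂ E := inferInstance
  -- the inner integral function
  set F : ℕ → E → ℝ := fun n x => ∫ y, f (A n x + y) ∂(ν n) with hF
  have hFcont : ∀ n, Continuous (F n) := by
    intro n
    have : Continuous fun x : E => ∫ y, f (x + y) ∂(ν n) := by
      apply continuous_of_dominated (bound := fun _ => ‖f‖)
      · exact fun x => (f.continuous.comp (continuous_const.add continuous_id)).measurable.aestronglyMeasurable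
      · exact fun x => Eventually.of_forall fun y => hfb _
      · exact integrable_const _
      · exact Eventually.of_forall fun y => f.continuous.comp (continuous_id.add continuous_const)
    exact this.comp (A n).continuous
  have hFbound : ∀ n x, ‖F n x‖ ≤ ‖f‖ := by
    intro n x
    have := hν n
    calc ‖F n x‖ ≤ ‖f‖ * ((ν n) Set.univ).toReal :=
      norm_integral_le_of_norm_le_const (Eventually.of_forall fun y => hfb _)
    _ = ‖f‖ := by simp
  -- factorization identity
  have key : ∀ n, ∫ x, f x ∂μ = ∫ x, F n x ∂μ := by
    intro n
    have := hν n
    have hi : Integrable (fun p : E × E => f (p.1 + p.2)) ((μ.map (A n)).prod (ν n)) := by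
      have hm : AEStronglyMeasurable (fun p : E × E => f (p.1 + p.2)) ((μ.map (A n)).prod (ν n)) :=
        (f.continuous.comp continuous_add).measurable.aestronglyMeasurable
      have : IsProbabilityMeasure (μ.map (A n)) := Measure.isProbabilityMeasure_map (A n).continuous.measurable.aemeasurable
      exact (integrable_const (‖f‖)).mono' hm (Eventually.of_forall fun p => hfb _)
    calc ∫ x, f x ∂μ = ∫ z, f z ∂((μ.map (A n)).conv (ν n)) := by rw [← hfac n]
      _ = ∫ p : E × E, f (p.1 + p.2) ∂((μ.map (A n)).prod (ν n)) := by
          rw [Measure.conv, integral_map measurable_add.aemeasurable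
            f.continuous.measurable.aestronglyMeasurable]
      _ = ∫ x, ∫ y, f (x + y) ∂(ν n) ∂(μ.map (A n)) := integral_prod _ hi
      _ = ∫ x, F n x ∂μ := by
          rw [integral_map (A n).continuous.measurable.aemeasurable]
          have : Continuous fun x : E => ∫ y, f (x + y) ∂(ν n) := by
            apply continuous_of_dominated (bound := fun _ => ‖f‖)
            · exact fun x => (f.continuous.comp (continuous_const.add continuous_id)).measurable.aestronglyMeasurable
            · exact fun x => Eventually.of_forall fun y => hfb _
            · exact integrable_const _
            · exact Eventually.of_forall fun y => f.continuous.comp (continuous_id.add continuous_const)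
          exact this.measurable.aestronglyMeasurable
  -- the dominating function
  set g : ℕ → E → ℝ := fun n x => min (2 * ‖f‖) (L * ‖A n x‖) with hg
  have hg_nonneg : ∀ n x, 0 ≤ g n x := fun n x => le_min (by positivity) (by positivity)
  have hg_cont : ∀ n, Continuous (g n) :=
    fun n => continuous_const.min (continuous_const.mul ((A n).continuous.norm))
  have hg_bdd : ∀ n x, ‖g n x‖ ≤ 2 * ‖f‖ := by
    intro n x
    rw [Real.norm_of_nonneg (hg_nonneg n x)]
    exact min_le_left _ _
  have hg_int : ∀ n, Integrable (g n) μ :=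
    fun n => (integrable_const (2*‖f‖)).mono' (hg_cont n).measurable.aestronglyMeasurable
      (Eventually.of_forall (hg_bdd n))
  -- pointwise bound
  have hpt : ∀ n x, ‖(∫ y, f y ∂(ν n)) - F n x‖ ≤ g n x := by
    intro n x
    have := hν n
    have h1 : Integrable (fun y => f y) (ν n) := f.integrable (ν n)
    have h2 : Integrable (fun y => f (A n x + y)) (ν n) :=
      (integrable_const (‖f‖)).mono'
        ((f.continuous.comp (continuous_const.add continuous_id)).measurable.aestronglyMeasurable)
        (Eventually.of_forall fun y => hfb _)
    rw [show (∫ y, f y ∂(ν n)) - F n x = ∫ y, (f y - f (A n x + y)) ∂(ν n) from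
      (integral_sub h1 h2).symm]
    calc ‖∫ y, (f y - f (A n x + y)) ∂(ν n)‖
        ≤ g n x * ((ν n) Set.univ).toReal := by
          apply norm_integral_le_of_norm_le_const
          refine Eventually.of_forall fun y => le_min ?_ ?_
          · calc ‖f y - f (A n x + y)‖ ≤ ‖f y‖ + ‖f (A n x + y)‖ := norm_sub_le _ _
              _ ≤ ‖f‖ + ‖f‖ := add_le_add (hfb _) (hfb _)
              _ = 2 * ‖f‖ := by ring
          · have hd := hf.dist_le_mul y (A n x + y)
            simp only [dist_eq_norm] at hd
            calc ‖f y - f (A n x + y)‖ ≤ L * ‖y - (A n x + y)‖ := hd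
              _ = L * ‖A n x‖ := by rw [show y - (A n x + y) = -(A n x) by abel, norm_neg]
      _ = g n x := by simp
  -- integral of g tends to 0
  have hg0 : Tendsto (fun n => ∫ x, g n x ∂μ) atTop (𝓝 0) := by
    have := tendsto_integral_of_dominated_convergence (μ := μ) (F := g) (f := fun _ => (0:ℝ))
      (fun _ => 2 * ‖f‖)
      (fun n => (hg_cont n).measurable.aestronglyMeasurable) (integrable_const _)
      (fun n => Eventually.of_forall (hg_bdd n)) ?_
    · simpa using this
    · refine Eventually.of_forall fun x => ?_
      have : Tendsto (fun n => (L:ℝ) * ‖A n x‖) atTop (𝓝 ((L:ℝ) * ‖(0:E)‖)) :=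
        ((hA x).norm).const_mul _
      simp only [norm_zero, mul_zero] at this
      have : Tendsto (fun n => min (2*‖f‖) ((L:ℝ) * ‖A n x‖)) atTop (𝓝 (min (2*‖f‖) 0)) :=
        tendsto_const_nhds.min this
      simpa [min_eq_right (show (0:ℝ) ≤ 2*‖f‖ by positivity)] using this
  -- squeeze
  rw [tendsto_iff_dist_tendsto_zero]
  apply squeeze_zero (fun n => dist_nonneg)
  · intro n
    show dist (∫ x, f x ∂(ν n)) (∫ x, f x ∂μ) ≤ ∫ x, g n x ∂μ
    rw [dist_eq_norm, key n]
    have hh_cont : Continuous fun x => (∫ y, f y ∂(ν n)) - F n x := continuous_const.sub (hFcont n)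
    have hh_int : Integrable (fun x => (∫ y, f y ∂(ν n)) - F n x) μ :=
      (integrable_const (2*‖f‖)).mono' hh_cont.measurable.aestronglyMeasurable
        (Eventually.of_forall fun x => (hpt n x).trans (by have := hg_bdd n x; rw [Real.norm_of_nonneg (hg_nonneg n x)] at this; exact this))
    calc ‖(∫ x, f x ∂(ν n)) - ∫ x, F n x ∂μ‖
        = ‖∫ x, ((∫ y, f y ∂(ν n)) - F n x) ∂μ‖ := by
          rw [integral_sub (integrable_const _) ?_]
          · simp
          · exact (integrable_const (‖f‖)).mono' (hFcont n).measurable.aestronglyMeasurable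
              (Eventually.of_forall (hFbound n))
      _ ≤ ∫ x, ‖(∫ y, f y ∂(ν n)) - F n x‖ ∂μ := norm_integral_le_integral_norm _
      _ ≤ ∫ x, g n x ∂μ := integral_mono hh_int.norm (hg_int n) (fun x => hpt n x)
  · exact hg0

/-- If `μ = Aₙ μ ∗ ν_{Aₙ}` and `Aₙ → 0` strongly, then `ν_{Aₙ} ⇒ μ`. -/
theorem cofactor_weakTendsto_self_of_strong_tendsto_zero
    {E : Type*} [NormedAddCommGroup E] [NormedSpace ℝ E] [CompleteSpace E]
    [TopologicalSpace.SeparableSpace E] [MeasurableSpace E] [BorelSpace E]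
    (μ : Measure E) [IsProbabilityMeasure μ]
    (A : ℕ → E →L[ℝ] E) (ν : ℕ → Measure E)
    (hν : ∀ n, IsProbabilityMeasure (ν n))
    (hfac : ∀ n, μ = (μ.map (A n)).conv (ν n))
    (hA : ∀ x : E, Filter.Tendsto (fun n => A n x) Filter.atTop (nhds (0 : E))) :
    WeakTendsto ν μ := by
  let μ' : ProbabilityMeasure E := ⟨μ, ‹_›⟩
  let νs : ℕ → ProbabilityMeasure E := fun n => ⟨ν n, hν n⟩
  have h_opens : ∀ G, IsOpen G → μ' G ≤ Filter.atTop.liminf (fun i => νs i G) := by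
    intro G hG
    by_cases hGu : G = Set.univ
    · subst hGu
      simp [liminf_const]
    -- the closed complement is nonempty
    have hcne : Gᶜ.Nonempty := Set.nonempty_compl.mpr hGu
    have hcc : IsClosed Gᶜ := hG.isClosed_compl
    -- Lipschitz approximations of the indicator of G
    set φ : ℕ → E → ℝ := fun k y => min 1 ((k : ℝ) * Metric.infDist y Gᶜ) with hφ
    have φ_cont : ∀ k, Continuous (φ k) :=
      fun k => continuous_const.min (continuous_const.mul (Metric.continuous_infDist_pt _))
    have φ_nonneg : ∀ k y, 0 ≤ φ k y := fun k y =>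
      le_min zero_le_one (mul_nonneg (Nat.cast_nonneg k) Metric.infDist_nonneg)
    have φ_le_one : ∀ k y, φ k y ≤ 1 := fun k y => min_le_left _ _
    have φ_lip : ∀ k : ℕ, LipschitzWith (k : ℝ≥0) (φ k) := by
      intro k
      have hmul : LipschitzWith (k : ℝ≥0) (fun y : E => (k : ℝ) * Metric.infDist y Gᶜ) := by
        apply LipschitzWith.of_dist_le_mul
        intro x y
        have h0 : dist (Metric.infDist x Gᶜ) (Metric.infDist y Gᶜ) ≤ dist x y := by
          simpa using (Metric.lipschitz_infDist_pt (Gᶜ)).dist_le_mul x y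
        calc dist ((k:ℝ) * Metric.infDist x Gᶜ) ((k:ℝ) * Metric.infDist y Gᶜ)
            = (k:ℝ) * dist (Metric.infDist x Gᶜ) (Metric.infDist y Gᶜ) := by
              simp only [Real.dist_eq, ← mul_sub, abs_mul, abs_of_nonneg (Nat.cast_nonneg (α := ℝ) k)]
          _ ≤ (k:ℝ) * dist x y := by
              exact mul_le_mul_of_nonneg_left h0 (Nat.cast_nonneg k)
          _ = ((k : ℝ≥0) : ℝ) * dist x y := by norm_cast
      exact hmul.const_min 1
    have φ_le_ind : ∀ k y, φ k y ≤ Set.indicator G (fun _ => (1:ℝ)) y := by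
      intro k y
      by_cases hy : y ∈ G
      · simpa [Set.indicator_of_mem hy] using φ_le_one k y
      · have : Metric.infDist y Gᶜ = 0 := Metric.infDist_zero_of_mem (by simpa using hy)
        simp [Set.indicator_of_notMem hy, hφ, this]
    have φ_tendsto : ∀ y, Tendsto (fun k => φ k y) atTop
        (𝓝 (Set.indicator G (fun _ => (1:ℝ)) y)) := by
      intro y
      by_cases hy : y ∈ G
      · have hd : 0 < Metric.infDist y Gᶜ :=
          (hcc.notMem_iff_infDist_pos hcne).mp (by simpa using hy)
        rw [Set.indicator_of_mem hy]
        have hconst : Tendsto (fun _ : ℕ => (1:ℝ)) atTop (𝓝 1) := tendsto_const_nhds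
        apply Tendsto.congr' ?_ hconst
        filter_upwards [eventually_ge_atTop (⌈(Metric.infDist y Gᶜ)⁻¹⌉₊)] with k hk
        have h1 : (1:ℝ) ≤ (k:ℝ) * Metric.infDist y Gᶜ := by
          rw [← inv_mul_cancel₀ hd.ne']
          apply mul_le_mul_of_nonneg_right _ hd.le
          exact le_trans (Nat.le_ceil _) (by exact_mod_cast hk)
        simp only [hφ]
        rw [min_eq_left h1]
      · have : Metric.infDist y Gᶜ = 0 := Metric.infDist_zero_of_mem (by simpa using hy)
        simp [Set.indicator_of_notMem hy, hφ, this]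
    -- bounded continuous versions
    let fk : ℕ → BoundedContinuousFunction E ℝ := fun k =>
      BoundedContinuousFunction.mkOfBound ⟨φ k, φ_cont k⟩ 1 (by
        intro x y
        have h1 := φ_nonneg k x; have h2 := φ_nonneg k y
        have h3 := φ_le_one k x; have h4 := φ_le_one k y
        show dist (φ k x) (φ k y) ≤ 1
        rw [Real.dist_eq, abs_sub_le_iff]
        constructor <;> linarith)
    -- convergence for each fk
    have hconv : ∀ k, Tendsto (fun n => ∫ x, fk k x ∂(ν n)) atTop (𝓝 (∫ x, fk k x ∂μ)) :=
      fun k => lip_integral_tendsto μ A ν hν hfac hA (fk k) k (φ_lip k)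
    -- integral of fk against ν n is at most ν n G
    have hle : ∀ k n, ∫ x, fk k x ∂(ν n) ≤ ((ν n) G).toReal := by
      intro k n
      have := hν n
      have hind : Integrable (Set.indicator G (fun _ => (1:ℝ))) (ν n) :=
        (integrable_const (1:ℝ)).indicator hG.measurableSet
      calc ∫ x, fk k x ∂(ν n) ≤ ∫ x, Set.indicator G (fun _ => (1:ℝ)) x ∂(ν n) :=
            integral_mono ((fk k).integrable (ν n)) hind (φ_le_ind k)
        _ = ((ν n) G).toReal := by
            rw [integral_indicator_const (1:ℝ) hG.measurableSet]; simp; rfl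
    -- integral of fk against μ tends to μ G
    have hμlim : Tendsto (fun k => ∫ x, fk k x ∂μ) atTop (𝓝 ((μ G).toReal)) := by
      have := tendsto_integral_of_dominated_convergence (μ := μ)
        (F := fun k x => fk k x) (f := Set.indicator G (fun _ => (1:ℝ)))
        (fun _ => (1:ℝ))
        (fun k => (φ_cont k).measurable.aestronglyMeasurable) (integrable_const _)
        (fun k => Eventually.of_forall (fun y => by
          show ‖φ k y‖ ≤ (1:ℝ)
          rw [Real.norm_of_nonneg (φ_nonneg k y)]; exact φ_le_one k y))
        (Eventually.of_forall φ_tendsto)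
      have heq : ∫ x, Set.indicator G (fun _ => (1:ℝ)) x ∂μ = ((μ G).toReal) := by
        rw [integral_indicator_const (1:ℝ) hG.measurableSet]; simp; rfl
      rwa [heq] at this
    -- liminf comparison in ℝ
    have hlim : ∀ k, ∫ x, fk k x ∂μ ≤ Filter.atTop.liminf (fun n => ((ν n) G).toReal) := by
      intro k
      rw [← (hconv k).liminf_eq]
      have hu : Filter.atTop.IsBoundedUnder (· ≥ ·) (fun n => ∫ x, fk k x ∂(ν n)) :=
        Filter.isBoundedUnder_of ⟨0, fun n => by
          have := hν n
          exact integral_nonneg (fun x => φ_nonneg k x)⟩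
      have hv : Filter.atTop.IsCoboundedUnder (· ≥ ·) (fun n => ((ν n) G).toReal) := by
        apply Filter.IsBoundedUnder.isCoboundedUnder_ge
        refine Filter.isBoundedUnder_of ⟨1, fun n => ?_⟩
        have := hν n
        calc ((ν n) G).toReal ≤ ((ν n) Set.univ).toReal := ENNReal.toReal_mono (by simp)
              (measure_mono (Set.subset_univ G))
          _ = 1 := by simp
      exact liminf_le_liminf (Eventually.of_forall (hle k)) hu hv
    have final_real : ((μ G).toReal) ≤ Filter.atTop.liminf (fun n => ((ν n) G).toReal) :=
      le_of_tendsto hμlim (Eventually.of_forall hlim)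
    -- transfer to ℝ≥0
    have aux : ((Filter.atTop.liminf (fun i => νs i G) : ℝ≥0) : ℝ) =
        Filter.atTop.liminf (fun i => ((νs i G : ℝ≥0) : ℝ)) := by
      refine Monotone.map_liminf_of_continuousAt (F := atTop) NNReal.coe_mono (fun i => νs i G)
        NNReal.continuous_coe.continuousAt ?_ ?_
      · exact Filter.IsBoundedUnder.isCoboundedUnder_ge
          (Filter.isBoundedUnder_of ⟨1, fun i => (νs i).apply_le_one G⟩)
      · exact Filter.isBoundedUnder_of ⟨0, fun i => by simp⟩
    rw [← NNReal.coe_le_coe, aux]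
    have h1 : ((μ' G : ℝ≥0) : ℝ) = (μ G).toReal := rfl
    have h2 : (fun i => ((νs i G : ℝ≥0) : ℝ)) = fun i => ((ν i) G).toReal := rfl
    rw [h1, h2]
    exact final_real
  have htend := MeasureTheory.tendsto_of_forall_isOpen_le_liminf h_opens
  have h2 := ProbabilityMeasure.tendsto_iff_forall_integral_tendsto.mp htend
  intro f
  exact h2 f
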